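/- Let v, v_1, ..., v_n ∈ ℝ^m. Suppose there exist λ_j ≥ 0 with ∑ λ_j = 1 such that every coordinate of v is strictly less than the corresponding coordinate of ∑ λ_j v_j. Then there exist an index set S of size at most m and weights μ_j ≥ 0 for j ∈ S with ∑_{j∈S} μ_j = 1 such that every coordinate of v is strictly less than the corresponding coordinate of ∑_{j∈S} μ_j v_j. -/
import Mathlib

lemma aux15 (m n : ℕ) (c : Fin n → Fin m → ℝ) (S : Finset (Fin n)) :
    ∀ lam : Fin n → ℝ, (∀ j, 0 ≤ lam j) → (∀ j ∉ S, lam j = 0) →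
    (∀ k, 0 < ∑ j, lam j * c j k) →
    ∃ (S' : Finset (Fin n)) (mu : Fin n → ℝ), S'.card ≤ m ∧ (∀ j, 0 ≤ mu j) ∧
      (∀ j ∉ S', mu j = 0) ∧ ∀ k, 0 < ∑ j, mu j * c j k := by
  induction S using Finset.strongInductionOn with
  | _ S ih =>
  intro lam h0 hsupp hpos
  by_cases hcard : S.card ≤ m
  · exact ⟨S, lam, hcard, h0, hsupp, hpos⟩
  push_neg at hcard
  have hnli : ¬ LinearIndependent ℝ (fun j : S => c j) := by
    intro h
    have h1 := h.fintype_card_le_finrank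
    rw [Fintype.card_coe] at h1
    have h2 : Module.finrank ℝ (Fin m → ℝ) = m := by simp
    omega
  obtain ⟨g, hg0, i0, hgi0⟩ := Fintype.not_linearIndependent_iff.mp hnli
  set α : Fin n → ℝ := fun j => if h : j ∈ S then g ⟨j, h⟩ else 0 with hα
  have hαS : ∀ j ∉ S, α j = 0 := by intro j hj; simp [hα, hj]
  have hαsum : ∀ k, ∑ j, α j * c j k = 0 := by
    intro k
    have h3 := congrFun hg0 k
    simp only [Finset.sum_apply, Pi.smul_apply, smul_eq_mul] at h3
    rw [Pi.zero_apply] at h3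
    rw [← h3]
    rw [← Finset.sum_subset (Finset.subset_univ S) (fun j _ hj => by simp [hαS j hj])]
    rw [← Finset.sum_attach S (fun j => α j * c j k)]
    exact Finset.sum_congr rfl (fun x _ => by simp [hα, x.2])
  have main : ∀ β : Fin n → ℝ, (∀ j ∉ S, β j = 0) → (∀ k, ∑ j, β j * c j k = 0) →
      (∃ j, 0 < β j) →
      ∃ (S' : Finset (Fin n)) (mu : Fin n → ℝ), S'.card ≤ m ∧ (∀ j, 0 ≤ mu j) ∧
        (∀ j ∉ S', mu j = 0) ∧ ∀ k, 0 < ∑ j, mu j * c j k := by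
    rintro β hβS hβsum ⟨j1, hj1⟩
    have hmemS : ∀ j, 0 < β j → j ∈ S := by
      intro j hj
      by_contra h
      rw [hβS j h] at hj
      exact lt_irrefl 0 hj
    set T := S.filter (fun j => 0 < β j) with hT
    have hTne : T.Nonempty := ⟨j1, Finset.mem_filter.mpr ⟨hmemS j1 hj1, hj1⟩⟩
    obtain ⟨j0, hj0T, hmin⟩ := T.exists_min_image (fun j => lam j / β j) hTne
    obtain ⟨hj0S, hβj0⟩ := Finset.mem_filter.mp hj0T
    set t := lam j0 / β j0 with hx
    have ht : 0 ≤ t := div_nonneg (h0 j0) hβj0.le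
    set lam' : Fin n → ℝ := fun j => lam j - t * β j with hlam'
    have h0' : ∀ j, 0 ≤ lam' j := by
      intro j
      rcases le_or_gt (β j) 0 with h | h
      · have : t * β j ≤ 0 := mul_nonpos_of_nonneg_of_nonpos ht h
        have := h0 j
        simp only [hlam']
        linarith
      · have hjT : j ∈ T := Finset.mem_filter.mpr ⟨hmemS j h, h⟩
        have h4 : t ≤ lam j / β j := hmin j hjT
        have h5 : t * β j ≤ lam j := by
          rw [← le_div_iff₀ h]
          exact h4
        simp only [hlam']
        linarith
    have hsupp' : ∀ j ∉ S.erase j0, lam' j = 0 := by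
      intro j hj
      by_cases hjS : j ∈ S
      · have hjj0 : j = j0 := by
          by_contra hne
          exact hj (Finset.mem_erase.mpr ⟨hne, hjS⟩)
        subst hjj0
        simp [hlam', hx, div_mul_cancel₀ _ hβj0.ne']
      · simp [hlam', hsupp j hjS, hβS j hjS]
    have hpos' : ∀ k, 0 < ∑ j, lam' j * c j k := by
      intro k
      have heq : ∑ j, lam' j * c j k
          = (∑ j, lam j * c j k) - t * ∑ j, β j * c j k := by
        simp [hlam', sub_mul, Finset.sum_sub_distrib, Finset.mul_sum, mul_assoc]
      rw [heq, hβsum k, mul_zero, sub_zero]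
      exact hpos k
    exact ih (S.erase j0) (Finset.erase_ssubset hj0S) lam' h0' hsupp' hpos'
  rcases lt_or_gt_of_ne hgi0 with h | h
  · refine main (fun j => -α j) (fun j hj => by simp [hαS j hj])
      (fun k => by simp [neg_mul, Finset.sum_neg_distrib, hαsum k]) ⟨i0, ?_⟩
    show 0 < -α (i0 : Fin n)
    have : α (i0 : Fin n) = g i0 := by simp [hα, i0.2]
    rw [this]
    linarith
  · refine main α hαS hαsum ⟨i0, ?_⟩
    have : α (i0 : Fin n) = g i0 := by simp [hα, i0.2]
    rw [this]
    exact h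

theorem stmt_15 (m n : ℕ) (hm : 0 < m) (v : Fin m → ℝ)
    (vs : Fin n → (Fin m → ℝ)) (lam : Fin n → ℝ)
    (hlam : ∀ j, 0 ≤ lam j) (hsum : ∑ j, lam j = 1)
    (hdom : ∀ k, v k < (∑ j, lam j • vs j) k) :
    ∃ (S : Finset (Fin n)) (mu : Fin n → ℝ), S.card ≤ m ∧
      (∀ j ∈ S, 0 ≤ mu j) ∧ ∑ j ∈ S, mu j = 1 ∧
      ∀ k, v k < (∑ j ∈ S, mu j • vs j) k := by
  set c : Fin n → Fin m → ℝ := fun j k => vs j k - v k with hc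
  have hpos : ∀ k, 0 < ∑ j, lam j * c j k := by
    intro k
    have h1 := hdom k
    simp only [Finset.sum_apply, Pi.smul_apply, smul_eq_mul] at h1
    have : ∑ j, lam j * c j k = (∑ j, lam j * vs j k) - v k := by
      simp [hc, mul_sub, Finset.sum_sub_distrib, ← Finset.sum_mul, hsum]
    rw [this]
    linarith
  obtain ⟨S', mu, hcard, hmu0, hmuS, hmupos⟩ :=
    aux15 m n c Finset.univ lam hlam (fun j hj => absurd (Finset.mem_univ j) hj) hpos
  have hzero : ∀ (f : Fin n → ℝ), ∑ j, mu j * f j = ∑ j ∈ S', mu j * f j := by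
    intro f
    exact (Finset.sum_subset (Finset.subset_univ S')
      (fun j _ hj => by simp [hmuS j hj])).symm
  have htot : 0 < ∑ j ∈ S', mu j := by
    by_contra h
    push_neg at h
    have hz : ∀ j ∈ S', mu j = 0 := by
      intro j hj
      have := Finset.sum_nonneg (fun j (_ : j ∈ S') => hmu0 j)
      have h5 : ∑ j ∈ S', mu j = 0 := le_antisymm h this
      exact (Finset.sum_eq_zero_iff_of_nonneg (fun j _ => hmu0 j)).mp h5 j hj
    have := hmupos ⟨0, hm⟩
    rw [hzero (fun j => c j ⟨0, hm⟩), Finset.sum_eq_zero (fun j hj => by rw [hz j hj, zero_mul])] at this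
    exact lt_irrefl 0 this
  set tot := ∑ j ∈ S', mu j with htotdef
  refine ⟨S', fun j => mu j / tot, hcard, fun j _ => div_nonneg (hmu0 j) htot.le, ?_, ?_⟩
  · rw [← Finset.sum_div, div_self htot.ne']
  · intro k
    have hp : 0 < ∑ j ∈ S', mu j * c j k := by
      rw [← hzero (fun j => c j k)]
      exact hmupos k
    simp only [Finset.sum_apply, Pi.smul_apply, smul_eq_mul]
    have key : ∑ j ∈ S', mu j * c j k = (∑ j ∈ S', mu j * vs j k) - tot * v k := by
      simp [hc, mul_sub, Finset.sum_sub_distrib, ← Finset.sum_mul, htotdef]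
    have h6 : ∑ j ∈ S', mu j / tot * vs j k = (∑ j ∈ S', mu j * vs j k) / tot := by
      rw [Finset.sum_div]
      exact Finset.sum_congr rfl (fun j _ => by ring)
    rw [h6, lt_div_iff₀ htot]
    rw [key] at hp
    linarith
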